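/- Let G be a graph with no path on n vertices (as a subgraph), and suppose G has at least cn + n vertices for a positive real c with cn an even integer. Then there exist disjoint vertex sets S and T with |S| = |T| = cn/2 such that there are no edges of G between S and T. -/

import Mathlib

open SimpleGraph Finset

/-- The number of edges between two (disjoint) vertex sets. -/
def edgesBetween {V : Type*} [DecidableEq V] (G : SimpleGraph V) [DecidableRel G.Adj]
    (S T : Finset V) : ℕ :=
  ((S ×ˢ T).filter fun p => G.Adj p.1 p.2).card

lemma walk_of_chain {V : Type*} (G : SimpleGraph V) :
    ∀ (l : List V), l.Chain' G.Adj → l.Nodup → l ≠ [] →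
      ∃ (u v : V) (p : G.Walk u v), p.IsPath ∧ p.support = l := by
  intro l
  induction l with
  | nil => simp
  | cons a t ih =>
    intro hc hnd _
    cases t with
    | nil => exact ⟨a, a, .nil, by simp, by simp⟩
    | cons b t' =>
      obtain ⟨u, v, p, hp, hs⟩ := ih hc.tail hnd.of_cons (by simp)
      have hu : u = b := by
        have h2 := p.support_eq_cons
        rw [hs] at h2
        exact (List.cons.injEq _ _ _ _ ▸ h2).1.symm
      subst hu
      have hadj : G.Adj a u := (List.isChain_cons_cons.mp hc).1
      refine ⟨a, v, p.cons hadj, hp.cons ?_, by simp [hs]⟩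
      rw [hs]
      exact (List.nodup_cons.mp hnd).1

lemma chain_length_lt {V : Type*} (G : SimpleGraph V) (n : ℕ) (hn : 1 ≤ n)
    (hnopath : ¬ ∃ (u v : V) (p : G.Walk u v), p.IsPath ∧ p.length + 1 = n)
    (l : List V) (hc : l.Chain' G.Adj) (hnd : l.Nodup) : l.length < n := by
  by_contra h
  push_neg at h
  have htake : (l.take n).length = n := by simp [h]
  obtain ⟨u, v, p, hp, hs⟩ := walk_of_chain G (l.take n) (hc.take n)
    (hnd.sublist (l.take_sublist n)) (by intro h0; rw [h0] at htake; simp at htake; omega)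
  exact hnopath ⟨u, v, p, hp, by
    have := p.length_support
    rw [hs, htake] at this
    omega⟩

lemma dfs {V : Type*} [Fintype V] [DecidableEq V] (G : SimpleGraph V) [DecidableRel G.Adj]
    (n k : ℕ) (hn : 1 ≤ n)
    (hnopath : ¬ ∃ (u v : V) (p : G.Walk u v), p.IsPath ∧ p.length + 1 = n)
    (hk : k + n ≤ Fintype.card V) :
    ∀ N (l : List V) (S T : Finset V),
      S.card + (k - T.card) ≤ N →
      l.Chain' G.Adj → l.Nodup →
      (∀ x : V, x ∈ l ∨ x ∈ S ∨ x ∈ T) →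
      (∀ x ∈ l, x ∉ S ∧ x ∉ T) →
      Disjoint S T →
      (∀ t ∈ T, ∀ s ∈ S, ¬ G.Adj t s) →
      T.card ≤ k →
      ∃ S' T' : Finset V, Disjoint S' T' ∧ T'.card = k ∧
        Fintype.card V + 1 ≤ S'.card + k + n ∧
        (∀ t ∈ T', ∀ s ∈ S', ¬ G.Adj t s) := by
  intro N
  induction N with
  | zero =>
    intro l S T hN hc hnd hcov hdl hdST hTS hTk
    -- terminal immediately
    have hS0 : S.card = 0 := by omega
    have hTkeq : T.card = k := by omega
    refine ⟨S, T, hdST, hTkeq, ?_, hTS⟩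
    have hlen : l.length < n := chain_length_lt G n hn hnopath l hc hnd
    have hsub : (Finset.univ : Finset V) ⊆ l.toFinset ∪ S ∪ T := by
      intro x _
      rcases hcov x with h | h | h
      · simp [List.mem_toFinset.mpr h]
      · simp [h]
      · simp [h]
    have h1 : Fintype.card V ≤ (l.toFinset ∪ S ∪ T).card := by
      rw [← Finset.card_univ]; exact Finset.card_le_card hsub
    have h2 : (l.toFinset ∪ S ∪ T).card ≤ l.toFinset.card + S.card + T.card :=
      le_trans (Finset.card_union_le _ _) (by
        have := Finset.card_union_le l.toFinset S; omega)
    have h3 : l.toFinset.card ≤ l.length := l.toFinset_card_le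
    omega
  | succ N ih =>
    intro l S T hN hc hnd hcov hdl hdST hTS hTk
    by_cases hterm : T.card = k
    · -- terminal
      refine ⟨S, T, hdST, hterm, ?_, hTS⟩
      have hlen : l.length < n := chain_length_lt G n hn hnopath l hc hnd
      have hsub : (Finset.univ : Finset V) ⊆ l.toFinset ∪ S ∪ T := by
        intro x _
        rcases hcov x with h | h | h
        · simp [List.mem_toFinset.mpr h]
        · simp [h]
        · simp [h]
      have h1 : Fintype.card V ≤ (l.toFinset ∪ S ∪ T).card := by
        rw [← Finset.card_univ]; exact Finset.card_le_card hsub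
      have h2 : (l.toFinset ∪ S ∪ T).card ≤ l.toFinset.card + S.card + T.card :=
        le_trans (Finset.card_union_le _ _) (by
          have := Finset.card_union_le l.toFinset S; omega)
      have h3 : l.toFinset.card ≤ l.length := l.toFinset_card_le
      omega
    · have hTlt : T.card < k := lt_of_le_of_ne hTk hterm
      cases l with
      | nil =>
        -- S must be nonempty
        have hSne : S.Nonempty := by
          by_contra hS
          rw [Finset.not_nonempty_iff_eq_empty] at hS
          have : (Finset.univ : Finset V) ⊆ T := by
            intro x _
            rcases hcov x with h | h | h
            · simp at h
            · rw [hS] at h; simp at h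
            · exact h
          have := Finset.card_le_card this
          rw [Finset.card_univ] at this
          omega
        obtain ⟨a, ha⟩ := hSne
        have haT : a ∉ T := Finset.disjoint_left.mp hdST ha
        apply ih [a] (S.erase a) T
        · rw [Finset.card_erase_of_mem ha]
          have : 1 ≤ S.card := Finset.card_pos.mpr ⟨a, ha⟩
          omega
        · exact List.isChain_singleton a
        · simp
        · intro x
          rcases hcov x with h | h | h
          · simp at h
          · by_cases hx : x = a
            · left; simp [hx]
            · right; left; exact Finset.mem_erase.mpr ⟨hx, h⟩
          · right; right; exact h
        · intro x hx
          simp at hx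
          subst hx
          exact ⟨fun h => (Finset.mem_erase.mp h).1 rfl, haT⟩
        · exact Finset.disjoint_of_subset_left (Finset.erase_subset _ _) hdST
        · intro t ht s hs
          exact hTS t ht s (Finset.mem_of_mem_erase hs)
        · exact hTk
      | cons a rest =>
        by_cases hext : ∃ b ∈ S, G.Adj a b
        · -- extend the path
          obtain ⟨b, hbS, hab⟩ := hext
          have hbl : b ∉ a :: rest := fun h => (hdl b h).1 hbS
          have hbT : b ∉ T := Finset.disjoint_left.mp hdST hbS
          apply ih (b :: a :: rest) (S.erase b) T
          · rw [Finset.card_erase_of_mem hbS]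
            have : 1 ≤ S.card := Finset.card_pos.mpr ⟨b, hbS⟩
            omega
          · exact List.isChain_cons_cons.mpr ⟨hab.symm, hc⟩
          · exact List.nodup_cons.mpr ⟨hbl, hnd⟩
          · intro x
            rcases hcov x with h | h | h
            · left; exact List.mem_cons_of_mem _ h
            · by_cases hx : x = b
              · left; simp [hx]
              · right; left; exact Finset.mem_erase.mpr ⟨hx, h⟩
            · right; right; exact h
          · intro x hx
            rcases List.mem_cons.mp hx with hx | hx
            · subst hx
              exact ⟨fun h => (Finset.mem_erase.mp h).1 rfl, hbT⟩
            · obtain ⟨h1, h2⟩ := hdl x hx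
              exact ⟨fun h => h1 (Finset.mem_of_mem_erase h), h2⟩
          · exact Finset.disjoint_of_subset_left (Finset.erase_subset _ _) hdST
          · intro t ht s hs
            exact hTS t ht s (Finset.mem_of_mem_erase hs)
          · exact hTk
        · -- retreat: move a to T
          push_neg at hext
          have haT : a ∉ T := (hdl a List.mem_cons_self).2
          have haS : a ∉ S := (hdl a List.mem_cons_self).1
          have hcardT : (insert a T).card = T.card + 1 := Finset.card_insert_of_notMem haT
          apply ih rest S (insert a T)
          · rw [hcardT]; omega
          · exact hc.tail
          · exact hnd.of_cons
          · intro x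
            rcases hcov x with h | h | h
            · rcases List.mem_cons.mp h with hx | hx
              · subst hx; right; right; exact Finset.mem_insert_self _ _
              · left; exact hx
            · right; left; exact h
            · right; right; exact Finset.mem_insert_of_mem h
          · intro x hx
            obtain ⟨h1, h2⟩ := hdl x (List.mem_cons_of_mem _ hx)
            refine ⟨h1, fun h => ?_⟩
            rcases Finset.mem_insert.mp h with hx2 | hx2
            · subst hx2
              exact (List.nodup_cons.mp hnd).1 hx
            · exact h2 hx2
          · rw [Finset.disjoint_insert_right]
            exact ⟨haS, hdST⟩
          · intro t ht s hs
            rcases Finset.mem_insert.mp ht with ht | ht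
            · subst ht; exact hext s hs
            · exact hTS t ht s hs
          · rw [hcardT]; omega

theorem stmt8 (c : ℝ) (hc : 0 < c) (n m : ℕ) (hm : (m : ℝ) = c * n) (hme : Even m)
    (V : Type*) [Fintype V] [DecidableEq V] (G : SimpleGraph V) [DecidableRel G.Adj]
    (hcard : m + n ≤ Fintype.card V)
    (hnopath : ¬ ∃ (u v : V) (p : G.Walk u v), p.IsPath ∧ p.length + 1 = n) :
    ∃ S T : Finset V, Disjoint S T ∧ S.card = m / 2 ∧ T.card = m / 2 ∧
      edgesBetween G S T = 0 := by
  rcases Nat.eq_zero_or_pos n with hn0 | hn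
  · -- n = 0 forces m = 0
    subst hn0
    have hm0 : m = 0 := by
      have : (m : ℝ) = 0 := by rw [hm]; simp
      exact_mod_cast this
    subst hm0
    exact ⟨∅, ∅, by simp, by simp, by simp, by simp [edgesBetween]⟩
  · set k := m / 2 with hkdef
    have hm2 : k + k = m := by
      obtain ⟨r, hr⟩ := hme
      omega
    have hkn : k + n ≤ Fintype.card V := by omega
    obtain ⟨S', T', hd, hT'k, hSc, hTS⟩ := dfs G n k hn hnopath hkn
      (Fintype.card V + k) [] Finset.univ ∅
      (by simp)
      (by exact List.isChain_nil) (by simp)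
      (by intro x; right; left; exact Finset.mem_univ x)
      (by simp)
      (by simp)
      (by simp)
      (by simp)
    have hkS' : k ≤ S'.card := by omega
    obtain ⟨S'', hsub, hS''⟩ := Finset.exists_subset_card_eq hkS'
    refine ⟨S'', T', Finset.disjoint_of_subset_left hsub hd, hS'', hT'k, ?_⟩
    rw [edgesBetween, Finset.card_eq_zero, Finset.filter_eq_empty_iff]
    rintro ⟨s, t⟩ hp
    rw [Finset.mem_product] at hp
    exact fun h => hTS t hp.2 s (hsub hp.1) h.symm
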